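/- There exists a regular tetrahedron with all four vertices in ℤ³ and side length l > 0 if and only if l = m√2 for some positive integer m. -/
import Mathlib


/-- A regular tetrahedron with vertices in `ℤ³` and edge length `l > 0`
exists iff `l = m√2` for some positive integer `m`. -/
theorem regular_tetrahedron_side_characterization (l : ℝ) (hl : 0 < l) :
    (∃ A B C D : ℤ × ℤ × ℤ, A ≠ B ∧ A ≠ C ∧ A ≠ D ∧ B ≠ C ∧ B ≠ D ∧ C ≠ D ∧
      (((A.1 - B.1) ^ 2 + (A.2.1 - B.2.1) ^ 2 + (A.2.2 - B.2.2) ^ 2 : ℤ) : ℝ) = l ^ 2 ∧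
      (((A.1 - C.1) ^ 2 + (A.2.1 - C.2.1) ^ 2 + (A.2.2 - C.2.2) ^ 2 : ℤ) : ℝ) = l ^ 2 ∧
      (((A.1 - D.1) ^ 2 + (A.2.1 - D.2.1) ^ 2 + (A.2.2 - D.2.2) ^ 2 : ℤ) : ℝ) = l ^ 2 ∧
      (((B.1 - C.1) ^ 2 + (B.2.1 - C.2.1) ^ 2 + (B.2.2 - C.2.2) ^ 2 : ℤ) : ℝ) = l ^ 2 ∧
      (((B.1 - D.1) ^ 2 + (B.2.1 - D.2.1) ^ 2 + (B.2.2 - D.2.2) ^ 2 : ℤ) : ℝ) = l ^ 2 ∧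
      (((C.1 - D.1) ^ 2 + (C.2.1 - D.2.1) ^ 2 + (C.2.2 - D.2.2) ^ 2 : ℤ) : ℝ) = l ^ 2) ↔
    (∃ m : ℕ, 0 < m ∧ l = (m : ℝ) * Real.sqrt 2) := by
  constructor
  · rintro ⟨⟨a1, a2, a3⟩, ⟨b1, b2, b3⟩, ⟨c1, c2, c3⟩, ⟨d1, d2, d3⟩,
      -, -, -, -, -, -, hAB, hAC, hAD, hBC, hBD, hCD⟩
    simp only at hAB hAC hAD hBC hBD hCD
    -- translate A to the origin
    obtain ⟨p1, rfl⟩ : ∃ x : ℤ, b1 = a1 + x := ⟨b1 - a1, by ring⟩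
    obtain ⟨p2, rfl⟩ : ∃ x : ℤ, b2 = a2 + x := ⟨b2 - a2, by ring⟩
    obtain ⟨p3, rfl⟩ : ∃ x : ℤ, b3 = a3 + x := ⟨b3 - a3, by ring⟩
    obtain ⟨q1, rfl⟩ : ∃ x : ℤ, c1 = a1 + x := ⟨c1 - a1, by ring⟩
    obtain ⟨q2, rfl⟩ : ∃ x : ℤ, c2 = a2 + x := ⟨c2 - a2, by ring⟩
    obtain ⟨q3, rfl⟩ : ∃ x : ℤ, c3 = a3 + x := ⟨c3 - a3, by ring⟩
    obtain ⟨r1, rfl⟩ : ∃ x : ℤ, d1 = a1 + x := ⟨d1 - a1, by ring⟩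
    obtain ⟨r2, rfl⟩ : ∃ x : ℤ, d2 = a2 + x := ⟨d2 - a2, by ring⟩
    obtain ⟨r3, rfl⟩ : ∃ x : ℤ, d3 = a3 + x := ⟨d3 - a3, by ring⟩
    rw [show (a1 - (a1 + p1)) ^ 2 + (a2 - (a2 + p2)) ^ 2 + (a3 - (a3 + p3)) ^ 2
      = p1 ^ 2 + p2 ^ 2 + p3 ^ 2 by ring] at hAB
    rw [show (a1 - (a1 + q1)) ^ 2 + (a2 - (a2 + q2)) ^ 2 + (a3 - (a3 + q3)) ^ 2
      = q1 ^ 2 + q2 ^ 2 + q3 ^ 2 by ring] at hAC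
    rw [show (a1 - (a1 + r1)) ^ 2 + (a2 - (a2 + r2)) ^ 2 + (a3 - (a3 + r3)) ^ 2
      = r1 ^ 2 + r2 ^ 2 + r3 ^ 2 by ring] at hAD
    rw [show (a1 + p1 - (a1 + q1)) ^ 2 + (a2 + p2 - (a2 + q2)) ^ 2 + (a3 + p3 - (a3 + q3)) ^ 2
      = (p1 - q1) ^ 2 + (p2 - q2) ^ 2 + (p3 - q3) ^ 2 by ring] at hBC
    rw [show (a1 + p1 - (a1 + r1)) ^ 2 + (a2 + p2 - (a2 + r2)) ^ 2 + (a3 + p3 - (a3 + r3)) ^ 2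
      = (p1 - r1) ^ 2 + (p2 - r2) ^ 2 + (p3 - r3) ^ 2 by ring] at hBD
    rw [show (a1 + q1 - (a1 + r1)) ^ 2 + (a2 + q2 - (a2 + r2)) ^ 2 + (a3 + q3 - (a3 + r3)) ^ 2
      = (q1 - r1) ^ 2 + (q2 - r2) ^ 2 + (q3 - r3) ^ 2 by ring] at hCD
    -- all six squared lengths are equal as integers
    have E2 : q1 ^ 2 + q2 ^ 2 + q3 ^ 2 = p1 ^ 2 + p2 ^ 2 + p3 ^ 2 := by
      exact_mod_cast hAC.trans hAB.symm
    have E3 : r1 ^ 2 + r2 ^ 2 + r3 ^ 2 = p1 ^ 2 + p2 ^ 2 + p3 ^ 2 := by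
      exact_mod_cast hAD.trans hAB.symm
    have E4 : (p1 - q1) ^ 2 + (p2 - q2) ^ 2 + (p3 - q3) ^ 2 = p1 ^ 2 + p2 ^ 2 + p3 ^ 2 := by
      exact_mod_cast hBC.trans hAB.symm
    have E5 : (p1 - r1) ^ 2 + (p2 - r2) ^ 2 + (p3 - r3) ^ 2 = p1 ^ 2 + p2 ^ 2 + p3 ^ 2 := by
      exact_mod_cast hBD.trans hAB.symm
    have E6 : (q1 - r1) ^ 2 + (q2 - r2) ^ 2 + (q3 - r3) ^ 2 = p1 ^ 2 + p2 ^ 2 + p3 ^ 2 := by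
      exact_mod_cast hCD.trans hAB.symm
    -- the common squared length is even, `= 2 * k` with `k` the common dot product
    obtain ⟨k, hk⟩ : ∃ x : ℤ, 2 * x = p1 ^ 2 + p2 ^ 2 + p3 ^ 2 :=
      ⟨p1 * q1 + p2 * q2 + p3 * q3, by linear_combination E2 - E4⟩
    have Hp : p1 ^ 2 + p2 ^ 2 + p3 ^ 2 = 2 * k := hk.symm
    have Hq : q1 ^ 2 + q2 ^ 2 + q3 ^ 2 = 2 * k := by linear_combination E2 - hk
    have Hr : r1 ^ 2 + r2 ^ 2 + r3 ^ 2 = 2 * k := by linear_combination E3 - hk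
    have Hpq : p1 * q1 + p2 * q2 + p3 * q3 = k := by
      have h2 : 2 * (p1 * q1 + p2 * q2 + p3 * q3) = 2 * k := by
        linear_combination E2 - E4 - hk
      exact mul_left_cancel₀ two_ne_zero h2
    have Hpr : p1 * r1 + p2 * r2 + p3 * r3 = k := by
      have h2 : 2 * (p1 * r1 + p2 * r2 + p3 * r3) = 2 * k := by
        linear_combination E3 - E5 - hk
      exact mul_left_cancel₀ two_ne_zero h2
    have Hqr : q1 * r1 + q2 * r2 + q3 * r3 = k := by
      have h2 : 2 * (q1 * r1 + q2 * r2 + q3 * r3) = 2 * k := by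
        linear_combination E2 + E3 - E6 - hk
      exact mul_left_cancel₀ two_ne_zero h2
    -- Gram determinant identity
    obtain ⟨det, hdetdef⟩ : ∃ x : ℤ,
        x = p1 * (q2 * r3 - q3 * r2) - p2 * (q1 * r3 - q3 * r1) + p3 * (q1 * r2 - q2 * r1) :=
      ⟨_, rfl⟩
    have hgram : det ^ 2 =
        (p1 ^ 2 + p2 ^ 2 + p3 ^ 2) * (q1 ^ 2 + q2 ^ 2 + q3 ^ 2) * (r1 ^ 2 + r2 ^ 2 + r3 ^ 2)
        + 2 * (p1 * q1 + p2 * q2 + p3 * q3) * (p1 * r1 + p2 * r2 + p3 * r3) *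
            (q1 * r1 + q2 * r2 + q3 * r3)
        - (p1 ^ 2 + p2 ^ 2 + p3 ^ 2) * (q1 * r1 + q2 * r2 + q3 * r3) ^ 2
        - (q1 ^ 2 + q2 ^ 2 + q3 ^ 2) * (p1 * r1 + p2 * r2 + p3 * r3) ^ 2
        - (r1 ^ 2 + r2 ^ 2 + r3 ^ 2) * (p1 * q1 + p2 * q2 + p3 * q3) ^ 2 := by
      rw [hdetdef]; ring
    rw [Hp, Hq, Hr, Hpq, Hpr, Hqr] at hgram
    have hdet : det ^ 2 = 4 * k ^ 3 := by linear_combination hgram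
    -- positivity
    have hnpos : 0 < p1 ^ 2 + p2 ^ 2 + p3 ^ 2 := by
      have h : (0 : ℝ) < ((p1 ^ 2 + p2 ^ 2 + p3 ^ 2 : ℤ) : ℝ) := hAB ▸ pow_pos hl 2
      exact_mod_cast h
    have hkpos : 0 < k := by linarith
    -- pass to naturals
    obtain ⟨m, hm⟩ : ∃ m : ℕ, k = (m : ℤ) := ⟨k.toNat, by omega⟩
    have hmpos : 0 < m := by
      have : (0 : ℤ) < (m : ℤ) := hm ▸ hkpos
      exact_mod_cast this
    have htm : det.natAbs ^ 2 = 4 * m ^ 3 := by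
      have hcast : ((det.natAbs : ℤ)) ^ 2 = det ^ 2 := by
        rw [← Int.abs_eq_natAbs, sq_abs]
      have : ((det.natAbs : ℤ)) ^ 2 = 4 * (m : ℤ) ^ 3 := by
        rw [hcast, hdet, hm]
      exact_mod_cast this
    have hteven : 2 ∣ det.natAbs := by
      rcases Nat.even_or_odd det.natAbs with h | h
      · exact h.two_dvd
      · exfalso
        have hodd : Odd (det.natAbs ^ 2) := h.pow
        rw [htm] at hodd
        exact (Nat.not_odd_iff_even.mpr ⟨2 * m ^ 3, by ring⟩) hodd
    obtain ⟨s, hs⟩ := hteven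
    rw [hs, show (2 * s) ^ 2 = 4 * s ^ 2 by ring] at htm
    have hsm : s ^ 2 = m ^ 3 := Nat.eq_of_mul_eq_mul_left (by norm_num) htm
    have hdvd : m ∣ s := by
      have h2 : m ^ 2 ∣ s ^ 2 := ⟨m, by rw [hsm]; ring⟩
      exact (Nat.pow_dvd_pow_iff two_ne_zero).mp h2
    obtain ⟨u, rfl⟩ := hdvd
    have hmu : m = u ^ 2 := by
      have h1 : m ^ 2 * u ^ 2 = m ^ 3 := by
        rw [← hsm]; ring
      have h2 : m ^ 2 * u ^ 2 = m ^ 2 * m := h1.trans (pow_succ m 2)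
      exact (Nat.eq_of_mul_eq_mul_left (by positivity) h2).symm
    have hupos : 0 < u := by
      rcases Nat.eq_zero_or_pos u with h | h
      · exfalso; rw [h] at hmu; simp at hmu; omega
      · exact h
    refine ⟨u, hupos, ?_⟩
    have hNpu : p1 ^ 2 + p2 ^ 2 + p3 ^ 2 = 2 * (u : ℤ) ^ 2 := by
      rw [← hk, hm, hmu]; push_cast; ring
    have hl2 : l ^ 2 = 2 * (u : ℝ) ^ 2 := by
      rw [← hAB, hNpu]; push_cast; ring
    have hsq : ((u : ℝ) * Real.sqrt 2) ^ 2 = l ^ 2 := by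
      rw [mul_pow, Real.sq_sqrt (by norm_num : (0:ℝ) ≤ 2), hl2]; ring
    have hun : (0 : ℝ) ≤ (u : ℝ) * Real.sqrt 2 := by positivity
    nlinarith [hsq, hun, hl]
  · rintro ⟨m, hm, rfl⟩
    have hm' : (0 : ℤ) < (m : ℤ) := by exact_mod_cast hm
    refine ⟨((0 : ℤ), (0 : ℤ), (0 : ℤ)), ((m : ℤ), (m : ℤ), 0), ((m : ℤ), 0, (m : ℤ)),
      (0, (m : ℤ), (m : ℤ)), ?_, ?_, ?_, ?_, ?_, ?_, ?_, ?_, ?_, ?_, ?_, ?_⟩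
    · simp [Prod.ext_iff]; omega
    · simp [Prod.ext_iff]; omega
    · simp [Prod.ext_iff]; omega
    · simp [Prod.ext_iff]; omega
    · simp [Prod.ext_iff]; omega
    · simp [Prod.ext_iff]; omega
    all_goals
      simp only
      push_cast
      rw [mul_pow, Real.sq_sqrt (by norm_num : (0:ℝ) ≤ 2)]
      ring
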